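/- The set {1/6, 5/6} is the unique optimal set of two-means for P, and the second quantization error is V_2 = 1/72. That is, for every set α ⊂ ℝ with card(α) ≤ 2, ∫ min_{a∈α}(x−a)² dP(x) ≥ 1/72, with equality if and only if α = {1/6, 5/6}. -/

import Mathlib

open MeasureTheory Set
open scoped ENNReal

noncomputable section

/-- The similarity map `S_j(x) = x/3^j + 1 - 1/3^(j-1)`. -/
def Smap (j : ℕ) (x : ℝ) : ℝ := x / 3 ^ j + 1 - 1 / 3 ^ (j - 1)

/-- The similarity ratio `s_j = 3^(-j)`. -/
def srat (j : ℕ) : ℝ := (3 : ℝ)⁻¹ ^ j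

/-- The probability `p_j = 2^(-j)`. -/
def prob (j : ℕ) : ℝ := (2 : ℝ)⁻¹ ^ j

/-- `J_j = S_j([0,1])`. -/
def Jset (j : ℕ) : Set ℝ := Smap j '' Set.Icc 0 1

/-- For a word `ω = ω₁⋯ω_n`, `S_ω = S_{ω₁} ∘ ⋯ ∘ S_{ω_n}`. -/
def Sword : List ℕ → ℝ → ℝ
  | [] => id
  | j :: ω => Smap j ∘ Sword ω

/-- `s_ω = s_{ω₁} ⋯ s_{ω_n}`. -/
def sword (ω : List ℕ) : ℝ := (ω.map srat).prod

/-- `p_ω = p_{ω₁} ⋯ p_{ω_n}`. -/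
def pword (ω : List ℕ) : ℝ := (ω.map prob).prod

/-- `J_ω = S_ω([0,1])`. -/
def Jword (ω : List ℕ) : Set ℝ := Sword ω '' Set.Icc 0 1

/-- `ω⁻(ω_{|ω|} + j)` : the word obtained from `ω` by increasing its last letter by `j`. -/
def wordInc (ω : List ℕ) (j : ℕ) : List ℕ := ω.dropLast ++ [ω.getLastD 1 + j]

/-- `a(ω) = S_ω(1/2)`. -/
def aw (ω : List ℕ) : ℝ := Sword ω (1 / 2)

/-- `a(ω, ∞) = S_{ω⁻(ω_{|ω|}+1)}(1/2) + s_{ω⁻(ω_{|ω|}+1)}`. -/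
def awInf (ω : List ℕ) : ℝ := Sword (wordInc ω 1) (1 / 2) + sword (wordInc ω 1)

/-- `J_{(ω,∞)} = ⋃_{j ≥ 1} J_{ω⁻(ω_{|ω|}+j)}`. -/
def JwordInf (ω : List ℕ) : Set ℝ := ⋃ j : ℕ, Jword (wordInc ω (j + 1))

/-- A (nonempty) word over the alphabet `ℕ = {1, 2, 3, …}`. -/
def IsWord (ω : List ℕ) : Prop := ω ≠ [] ∧ ∀ i ∈ ω, 1 ≤ i

/-- The self-similarity equation `P = ∑_{j=1}^∞ 2^{-j} · P ∘ S_j^{-1}`. -/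
def SelfSim (P : Measure ℝ) : Prop :=
  P = Measure.sum fun j : ℕ => ((2 : ℝ≥0∞) ^ (j + 1))⁻¹ • P.map (Smap (j + 1))

/-- The distortion error `∫ min_{a ∈ A} (x - a)² dP(x)` of a set `A` of points. -/
def err (P : Measure ℝ) (A : Set ℝ) : ℝ :=
  ∫ x, sInf ((fun a => (x - a) ^ 2) '' A) ∂P

/-- The `n`-th quantization error. -/
def quantErr (P : Measure ℝ) (n : ℕ) : ℝ :=
  sInf {v | ∃ A : Set ℝ, A.Finite ∧ A.Nonempty ∧ A.ncard ≤ n ∧ v = err P A}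

/-- An optimal set of `n`-means. -/
def IsOptimal (P : Measure ℝ) (n : ℕ) (A : Set ℝ) : Prop :=
  A.Finite ∧ A.Nonempty ∧ A.ncard ≤ n ∧ err P A = quantErr P n

/-- The Voronoi region of `a` with respect to `A`. -/
def voronoi (A : Set ℝ) (a : ℝ) : Set ℝ := {x | ∀ b ∈ A, |x - a| ≤ |x - b|}

/-- `α(ℓ) = {a(ω) : p_ω = 2^{-ℓ}} ∪ {a(ω,∞) : p_ω = 2^{-ℓ}}`. -/
def alphaSet (l : ℕ) : Set ℝ :=
  {x | ∃ ω : List ℕ, IsWord ω ∧ pword ω = (2 : ℝ)⁻¹ ^ l ∧ (x = aw ω ∨ x = awInf ω)}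

/-- The set `α_n(I)` built from `α(ℓ)` and `I ⊆ α(ℓ)`. -/
def alphaNI (l : ℕ) (I : Set ℝ) : Set ℝ :=
  (alphaSet l \ I)
    ∪ {x | ∃ ω : List ℕ, IsWord ω ∧ pword ω = (2 : ℝ)⁻¹ ^ l ∧ aw ω ∈ I ∧
        (x = aw (ω ++ [1]) ∨ x = awInf (ω ++ [1]))}
    ∪ {x | ∃ ω : List ℕ, IsWord ω ∧ pword ω = (2 : ℝ)⁻¹ ^ l ∧ awInf ω ∈ I ∧
        (x = aw (wordInc ω 1) ∨ x = awInf (wordInc ω 1))}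

noncomputable section

def cu (x : ℝ) : ℝ := x / 3
def cv (x : ℝ) : ℝ := x / 3 + 2 / 3

lemma measurable_Smap (j : ℕ) : Measurable (Smap j) := by
  unfold Smap; fun_prop

lemma measurable_cu : Measurable cu := by unfold cu; fun_prop
lemma measurable_cv : Measurable cv := by unfold cv; fun_prop

lemma Smap_one : Smap 1 = cu := by
  funext x; simp [Smap, cu]

lemma Smap_succ (j : ℕ) : Smap (j + 2) = cv ∘ Smap (j + 1) := by
  funext x
  simp only [Smap, cv, Function.comp_apply, Nat.add_sub_cancel]
  rw [show j + 2 - 1 = j + 1 by omega]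
  have h3 : (3:ℝ) ^ (j+1) ≠ 0 := by positivity
  have h3' : (3:ℝ) ^ j ≠ 0 := by positivity
  field_simp
  ring

lemma selfsim_apply (P : Measure ℝ) (h : SelfSim P) (A : Set ℝ) (hA : MeasurableSet A) :
    P A = ∑' j : ℕ, ((2:ℝ≥0∞)^(j+1))⁻¹ * P (Smap (j+1) ⁻¹' A) := by
  conv_lhs => rw [h]
  rw [Measure.sum_apply _ hA]
  congr 1; funext j
  rw [Measure.smul_apply, Measure.map_apply (measurable_Smap _) hA, smul_eq_mul]

lemma twomap (P : Measure ℝ) (h : SelfSim P) (A : Set ℝ) (hA : MeasurableSet A) :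
    P A = 2⁻¹ * P (cu ⁻¹' A) + 2⁻¹ * P (cv ⁻¹' A) := by
  rw [selfsim_apply P h A hA, tsum_eq_zero_add' ENNReal.summable]
  have h0 : ((2:ℝ≥0∞)^(0+1))⁻¹ * P (Smap (0+1) ⁻¹' A) = 2⁻¹ * P (cu ⁻¹' A) := by
    norm_num [Smap_one]
  rw [h0]
  congr 1
  have hpre : ∀ j : ℕ, Smap (j+1+1) ⁻¹' A = Smap (j+1) ⁻¹' (cv ⁻¹' A) := by
    intro j
    rw [show j+1+1 = j+2 from rfl, Smap_succ, preimage_comp]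
  have : ∀ j : ℕ, ((2:ℝ≥0∞)^(j+1+1))⁻¹ * P (Smap (j+1+1) ⁻¹' A)
      = 2⁻¹ * (((2:ℝ≥0∞)^(j+1))⁻¹ * P (Smap (j+1) ⁻¹' (cv ⁻¹' A))) := by
    intro j
    rw [hpre j, pow_succ, mul_comm ((2:ℝ≥0∞)^(j+1)) 2, ENNReal.mul_inv (by simp) (by simp)]
    ring
  simp_rw [this]
  rw [ENNReal.tsum_mul_left, ← selfsim_apply P h _ (hA.preimage measurable_cv)]

lemma twomap_measure (P : Measure ℝ) (h : SelfSim P) :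
    P = (2⁻¹ : ℝ≥0∞) • P.map cu + (2⁻¹ : ℝ≥0∞) • P.map cv := by
  ext A hA
  rw [twomap P h A hA]
  simp [Measure.map_apply measurable_cu hA, Measure.map_apply measurable_cv hA]

end
noncomputable section
variable (P : Measure ℝ) [IsProbabilityMeasure P]

lemma ae_mem01 (hsupp : P (Set.Icc 0 1) = 1) : ∀ᵐ x ∂P, x ∈ Icc (0:ℝ) 1 := by
  rw [ae_iff]
  have h := measure_compl (measurableSet_Icc : MeasurableSet (Icc (0:ℝ) 1)) (measure_ne_top P _)
  rw [hsupp, measure_univ] at h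
  simpa [compl_def] using h.trans (tsub_self 1)

lemma integrable_of_bdd (hae : ∀ᵐ x ∂P, x ∈ Icc (0:ℝ) 1) (g : ℝ → ℝ) (hg : Measurable g)
    (C : ℝ) (hC : ∀ x ∈ Icc (0:ℝ) 1, |g x| ≤ C) : Integrable g P := by
  refine Integrable.mono' (integrable_const C) hg.aestronglyMeasurable ?_
  filter_upwards [hae] with x hx
  simpa using hC x hx

lemma cu_mem {x : ℝ} (hx : x ∈ Icc (0:ℝ) 1) : cu x ∈ Icc (0:ℝ) 1 := by
  simp only [cu, mem_Icc] at hx ⊢; constructor <;> linarith [hx.1, hx.2]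

lemma cv_mem {x : ℝ} (hx : x ∈ Icc (0:ℝ) 1) : cv x ∈ Icc (0:ℝ) 1 := by
  simp only [cv, mem_Icc] at hx ⊢; constructor <;> linarith [hx.1, hx.2]

lemma int_two (hsupp : P (Set.Icc 0 1) = 1) (hself : SelfSim P)
    (g : ℝ → ℝ) (hg : Measurable g) (C : ℝ) (hC : ∀ x ∈ Icc (0:ℝ) 1, |g x| ≤ C) :
    ∫ x, g x ∂P = (∫ x, g (cu x) ∂P) / 2 + (∫ x, g (cv x) ∂P) / 2 := by
  have hae := ae_mem01 P hsupp
  have hgcu : Integrable (fun x => g (cu x)) P := by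
    refine Integrable.mono' (integrable_const C) (hg.comp measurable_cu).aestronglyMeasurable ?_
    filter_upwards [hae] with x hx
    simpa using hC _ (cu_mem hx)
  have hgcv : Integrable (fun x => g (cv x)) P := by
    refine Integrable.mono' (integrable_const C) (hg.comp measurable_cv).aestronglyMeasurable ?_
    filter_upwards [hae] with x hx
    simpa using hC _ (cv_mem hx)
  have hmapu : Integrable g (P.map cu) :=
    (integrable_map_measure hg.aestronglyMeasurable measurable_cu.aemeasurable).mpr hgcu
  have hmapv : Integrable g (P.map cv) :=
    (integrable_map_measure hg.aestronglyMeasurable measurable_cv.aemeasurable).mpr hgcv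
  conv_lhs => rw [twomap_measure P hself]
  rw [integral_add_measure (hmapu.smul_measure (by norm_num)) (hmapv.smul_measure (by norm_num)),
    integral_smul_measure, integral_smul_measure,
    integral_map measurable_cu.aemeasurable hg.aestronglyMeasurable,
    integral_map measurable_cv.aemeasurable hg.aestronglyMeasurable]
  norm_num
  ring

end
noncomputable section
variable (P : Measure ℝ) [IsProbabilityMeasure P]

lemma integrable_id' (hsupp : P (Set.Icc 0 1) = 1) : Integrable (fun x : ℝ => x) P :=
  integrable_of_bdd P (ae_mem01 P hsupp) _ measurable_id 1
    (fun x hx => by rw [abs_le]; exact ⟨by linarith [hx.1], hx.2⟩)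

lemma integrable_sq (hsupp : P (Set.Icc 0 1) = 1) : Integrable (fun x : ℝ => x ^ 2) P :=
  integrable_of_bdd P (ae_mem01 P hsupp) _ (measurable_id.pow_const 2) 1
    (fun x hx => by rw [abs_le]; constructor <;> nlinarith [hx.1, hx.2])

lemma moment1 (hsupp : P (Set.Icc 0 1) = 1) (hself : SelfSim P) :
    ∫ x, x ∂P = 1 / 2 := by
  have h := int_two P hsupp hself (fun x => x) measurable_id 1
    (fun x hx => by rw [abs_le]; exact ⟨by linarith [hx.1], hx.2⟩)
  have hid := integrable_id' P hsupp
  have hcu : ∫ x, cu x ∂P = (∫ x, x ∂P) / 3 := by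
    simp only [cu, div_eq_mul_inv]
    rw [integral_mul_const]
  have hcv : ∫ x, cv x ∂P = (∫ x, x ∂P) / 3 + 2 / 3 := by
    simp only [cv]
    rw [integral_add (by simpa [div_eq_mul_inv] using hid.mul_const (3:ℝ)⁻¹)
      (integrable_const _), integral_const]
    simp only [div_eq_mul_inv]
    rw [integral_mul_const]
    simp [measure_univ]
  rw [hcu, hcv] at h
  linarith

lemma moment2 (hsupp : P (Set.Icc 0 1) = 1) (hself : SelfSim P) :
    ∫ x, x ^ 2 ∂P = 3 / 8 := by
  have h := int_two P hsupp hself (fun x => x ^ 2) (measurable_id.pow_const 2) 1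
    (fun x hx => by show |x ^ 2| ≤ 1; rw [abs_le]; constructor <;> nlinarith [hx.1, hx.2])
  have hid := integrable_id' P hsupp
  have hsq := integrable_sq P hsupp
  have hcu : ∫ x, (cu x) ^ 2 ∂P = (∫ x, x ^ 2 ∂P) / 9 := by
    have : ∀ x : ℝ, (cu x) ^ 2 = x ^ 2 * (1/9) := fun x => by simp only [cu]; ring
    simp only [this]
    rw [integral_mul_const]; ring
  have hcv : ∫ x, (cv x) ^ 2 ∂P = (∫ x, x ^ 2 ∂P) / 9 + (4/9) * (1/2) + 4 / 9 := by
    have : ∀ x : ℝ, (cv x) ^ 2 = x ^ 2 * (1/9) + ((4/9) * x + 4/9) := fun x => by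
      simp only [cv]; ring
    have hlin : Integrable (fun x : ℝ => 4 / 9 * x + 4 / 9) P :=
      (hid.const_mul _).add (integrable_const _)
    have hsq9 : Integrable (fun x : ℝ => x ^ 2 * (1 / 9)) P := hsq.mul_const _
    simp only [this]
    rw [integral_add hsq9 hlin, integral_mul_const,
      integral_add (hid.const_mul _) (integrable_const _),
      integral_const_mul, moment1 P hsupp hself, integral_const]
    simp [measure_univ]
    ring
  rw [hcu, hcv] at h
  linarith

end
noncomputable section

def pf (P : Measure ℝ) (m : ℝ) : ℝ := (P (Iio m)).toReal
def tf (P : Measure ℝ) (m : ℝ) : ℝ := ∫ x in Iio m, x ∂P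

lemma cu_pre (m : ℝ) : cu ⁻¹' Iio m = Iio (3 * m) := by
  ext x; simp only [cu, mem_preimage, mem_Iio]
  constructor <;> intro h <;> linarith

lemma cv_pre (m : ℝ) : cv ⁻¹' Iio m = Iio (3 * m - 2) := by
  ext x; simp only [cv, mem_preimage, mem_Iio]
  constructor <;> intro h <;> linarith

variable (P : Measure ℝ) [IsProbabilityMeasure P]

lemma int_iio (hsupp : P (Set.Icc 0 1) = 1) (hself : SelfSim P)
    (f : ℝ → ℝ) (hf : Measurable f) (C : ℝ) (hC : ∀ x ∈ Icc (0:ℝ) 1, |f x| ≤ C) (m : ℝ) :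
    ∫ x in Iio m, f x ∂P
      = (∫ x in Iio (3*m), f (cu x) ∂P) / 2 + (∫ x in Iio (3*m-2), f (cv x) ∂P) / 2 := by
  have hmeas : Measurable ((Iio m).indicator f) := hf.indicator measurableSet_Iio
  have hbd : ∀ x ∈ Icc (0:ℝ) 1, |(Iio m).indicator f x| ≤ max C 0 := by
    intro x hx
    by_cases hxm : x ∈ Iio m
    · rw [indicator_of_mem hxm]; exact le_max_of_le_left (hC x hx)
    · rw [indicator_of_notMem hxm]; simp
  have h := int_two P hsupp hself ((Iio m).indicator f) hmeas (max C 0) hbd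
  have hcu : ∀ x : ℝ, (Iio m).indicator f (cu x) = (Iio (3*m)).indicator (f ∘ cu) x := by
    intro x; rw [← indicator_comp_right, cu_pre]
  have hcv : ∀ x : ℝ, (Iio m).indicator f (cv x) = (Iio (3*m-2)).indicator (f ∘ cv) x := by
    intro x; rw [← indicator_comp_right, cv_pre]
  simp only [hcu, hcv] at h
  rw [integral_indicator measurableSet_Iio, integral_indicator measurableSet_Iio,
    integral_indicator measurableSet_Iio] at h
  exact h

lemma pf_rec (hsupp : P (Set.Icc 0 1) = 1) (hself : SelfSim P) (m : ℝ) :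
    pf P m = pf P (3*m) / 2 + pf P (3*m-2) / 2 := by
  have h := int_iio P hsupp hself (fun _ => (1:ℝ)) measurable_const 1 (by intro x _; simp) m
  simpa [pf, setIntegral_const, Measure.real] using h

lemma tf_rec (hsupp : P (Set.Icc 0 1) = 1) (hself : SelfSim P) (m : ℝ) :
    tf P m = tf P (3*m) / 6 + tf P (3*m-2) / 6 + pf P (3*m-2) / 3 := by
  have h := int_iio P hsupp hself (fun x => x) measurable_id 1
    (fun x hx => by rw [abs_le]; exact ⟨by linarith [hx.1], hx.2⟩) m
  have hid := integrable_id' P hsupp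
  have h1 : ∫ x in Iio (3*m), cu x ∂P = (∫ x in Iio (3*m), x ∂P) / 3 := by
    simp only [cu]; rw [integral_div]
  have h2 : ∫ x in Iio (3*m-2), cv x ∂P
      = (∫ x in Iio (3*m-2), x ∂P) / 3 + (2/3) * pf P (3*m-2) := by
    simp only [cv]
    rw [integral_add (hid.integrableOn.div_const 3) ((integrable_const (2/3:ℝ)).integrableOn),
      integral_div, setIntegral_const]
    simp [pf, Measure.real]
    ring
  show (∫ x in Iio m, x ∂P) = _
  rw [h, h1, h2]
  unfold tf
  ring

end
noncomputable section
variable (P : Measure ℝ) [IsProbabilityMeasure P]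

lemma compl_null (hsupp : P (Set.Icc 0 1) = 1) : P ((Icc (0:ℝ) 1)ᶜ) = 0 := by
  have h := measure_compl (measurableSet_Icc : MeasurableSet (Icc (0:ℝ) 1)) (measure_ne_top P _)
  rw [hsupp, measure_univ] at h
  simpa using h

lemma iio_zero_null (hsupp : P (Set.Icc 0 1) = 1) {m : ℝ} (hm : m ≤ 0) : P (Iio m) = 0 := by
  refine measure_mono_null ?_ (compl_null P hsupp)
  intro x hx
  simp only [mem_Iio] at hx
  simp only [mem_compl_iff, mem_Icc, not_and_or, not_le]
  left; linarith

lemma ioi_one_null (hsupp : P (Set.Icc 0 1) = 1) {m : ℝ} (hm : 1 ≤ m) : P (Ioi m) = 0 := by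
  refine measure_mono_null ?_ (compl_null P hsupp)
  intro x hx
  simp only [mem_Ioi] at hx
  simp only [mem_compl_iff, mem_Icc, not_and_or, not_le]
  right; linarith

lemma pf_nonpos (hsupp : P (Set.Icc 0 1) = 1) {m : ℝ} (hm : m ≤ 0) :
    pf P m = 0 ∧ tf P m = 0 := by
  have h0 := iio_zero_null P hsupp hm
  constructor
  · simp [pf, h0]
  · unfold tf
    rw [Measure.restrict_eq_zero.mpr h0, integral_zero_measure]

lemma cyl_left (hsupp : P (Set.Icc 0 1) = 1) (hself : SelfSim P) (k : ℕ) :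
    P (Icc 0 ((1/3:ℝ)^k)) = (2:ℝ≥0∞)⁻¹ ^ k := by
  induction k with
  | zero => simpa using hsupp
  | succ k ih =>
    have h := twomap P hself (Icc 0 ((1/3:ℝ)^(k+1))) measurableSet_Icc
    have hcu : cu ⁻¹' (Icc 0 ((1/3:ℝ)^(k+1))) = Icc 0 ((1/3:ℝ)^k) := by
      ext x
      simp only [cu, mem_preimage, mem_Icc]
      have hps : ((1:ℝ)/3)^(k+1) = (1/3)^k * (1/3) := pow_succ _ _
      constructor <;> intro ⟨h1, h2⟩ <;> constructor <;> linarith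
    have hcv : P (cv ⁻¹' (Icc 0 ((1/3:ℝ)^(k+1)))) = 0 := by
      refine measure_mono_null ?_ (iio_zero_null P hsupp (le_refl 0))
      intro x hx
      simp only [cv, mem_preimage, mem_Icc] at hx
      simp only [mem_Iio]
      have hp : ((1:ℝ)/3)^(k+1) ≤ 1/3 := by
        calc ((1:ℝ)/3)^(k+1) ≤ (1/3)^1 := by
              apply pow_le_pow_of_le_one (by norm_num) (by norm_num) (by omega)
        _ = 1/3 := by norm_num
      nlinarith [hx.1, hx.2]
    rw [hcu, hcv] at h
    rw [h, ih, mul_zero, add_zero, pow_succ]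
    ring

lemma cyl_right (hsupp : P (Set.Icc 0 1) = 1) (hself : SelfSim P) (k : ℕ) :
    P (Icc (1 - (1/3:ℝ)^k) 1) = (2:ℝ≥0∞)⁻¹ ^ k := by
  induction k with
  | zero => simpa using hsupp
  | succ k ih =>
    have h := twomap P hself (Icc (1 - (1/3:ℝ)^(k+1)) 1) measurableSet_Icc
    have hcv : cv ⁻¹' (Icc (1 - (1/3:ℝ)^(k+1)) 1) = Icc (1 - (1/3:ℝ)^k) 1 := by
      ext x
      simp only [cv, mem_preimage, mem_Icc]
      have hps : ((1:ℝ)/3)^(k+1) = (1/3)^k * (1/3) := pow_succ _ _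
      constructor <;> intro ⟨h1, h2⟩ <;> constructor <;> linarith
    have hcu : P (cu ⁻¹' (Icc (1 - (1/3:ℝ)^(k+1)) 1)) = 0 := by
      refine measure_mono_null ?_ (ioi_one_null P hsupp (le_refl 1))
      intro x hx
      simp only [cu, mem_preimage, mem_Icc] at hx
      simp only [mem_Ioi]
      have hp : ((1:ℝ)/3)^(k+1) ≤ 1/3 := by
        calc ((1:ℝ)/3)^(k+1) ≤ (1/3)^1 := by
              apply pow_le_pow_of_le_one (by norm_num) (by norm_num) (by omega)
        _ = 1/3 := by norm_num
      nlinarith [hx.1, hx.2]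
    rw [hcv, hcu] at h
    rw [h, ih, mul_zero, zero_add, pow_succ]
    ring

end
noncomputable section
variable (P : Measure ℝ) [IsProbabilityMeasure P]

lemma point_one_null (hsupp : P (Set.Icc 0 1) = 1) (hself : SelfSim P) : P {(1:ℝ)} = 0 := by
  by_contra hne
  have hpos : 0 < P {(1:ℝ)} := pos_iff_ne_zero.mpr hne
  have hfin : P {(1:ℝ)} ≠ ⊤ := measure_ne_top P _
  have htr : 0 < (P {(1:ℝ)}).toReal := ENNReal.toReal_pos hne hfin
  obtain ⟨k, hk⟩ := exists_pow_lt_of_lt_one htr (by norm_num : (1:ℝ)/2 < 1)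
  have hsub : {(1:ℝ)} ⊆ Icc (1 - (1/3:ℝ)^k) 1 := by
    intro x hx
    simp only [mem_singleton_iff] at hx
    subst hx
    constructor
    · have : (0:ℝ) < (1/3)^k := pow_pos (by norm_num) k
      linarith
    · exact le_refl 1
  have hle := measure_mono (μ := P) hsub
  rw [cyl_right P hsupp hself k] at hle
  have h2 : (P {(1:ℝ)}).toReal ≤ (((2:ℝ≥0∞))⁻¹^k).toReal :=
    ENNReal.toReal_mono (by simp) hle
  rw [ENNReal.toReal_pow, ENNReal.toReal_inv, ENNReal.toReal_ofNat] at h2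
  have h3 : ((1:ℝ)/2)^k = (2:ℝ)⁻¹^k := by norm_num
  linarith
end
noncomputable section
variable (P : Measure ℝ) [IsProbabilityMeasure P]

lemma iio_one (hsupp : P (Set.Icc 0 1) = 1) (hself : SelfSim P) {m : ℝ} (hm : 1 ≤ m) :
    P (Iio m) = 1 := by
  refine le_antisymm prob_le_one ?_
  have hsub : Icc (0:ℝ) 1 ⊆ Iio m ∪ {1} := by
    intro x hx
    rcases lt_or_ge x m with h | h
    · exact Or.inl h
    · right
      simp only [mem_singleton_iff]
      have := hx.2
      linarith [le_antisymm hx.2 (le_trans hm h)]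
  calc (1:ℝ≥0∞) = P (Icc 0 1) := hsupp.symm
    _ ≤ P (Iio m ∪ {1}) := measure_mono (μ := P) hsub
    _ ≤ P (Iio m) + P {1} := measure_union_le _ _
    _ = P (Iio m) := by rw [point_one_null P hsupp hself, add_zero]

lemma pf_ge_one (hsupp : P (Set.Icc 0 1) = 1) (hself : SelfSim P) {m : ℝ} (hm : 1 ≤ m) :
    pf P m = 1 ∧ tf P m = 1/2 := by
  have h1 := iio_one P hsupp hself hm
  refine ⟨by simp [pf, h1], ?_⟩
  have hcompl : P ((Iio m)ᶜ) = 0 := by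
    have := measure_compl (measurableSet_Iio : MeasurableSet (Iio m)) (measure_ne_top P _)
    rw [h1, measure_univ] at this
    simpa using this
  have hadd := integral_add_compl (measurableSet_Iio : MeasurableSet (Iio m))
    (integrable_id' P hsupp)
  have hzero : ∫ x in (Iio m)ᶜ, x ∂P = 0 := by
    rw [Measure.restrict_eq_zero.mpr hcompl, integral_zero_measure]
  unfold tf
  have := moment1 P hsupp hself
  rw [hzero] at hadd
  simp only [add_zero] at hadd
  rw [hadd, this]

lemma pf_mem (m : ℝ) : 0 ≤ pf P m ∧ pf P m ≤ 1 := by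
  constructor
  · exact ENNReal.toReal_nonneg
  · rw [pf, show (1:ℝ) = (1:ℝ≥0∞).toReal by simp]
    exact ENNReal.toReal_mono (by simp) prob_le_one

lemma pf_pos (hsupp : P (Set.Icc 0 1) = 1) (hself : SelfSim P) {m : ℝ} (hm : 0 < m) :
    0 < pf P m := by
  obtain ⟨k, hk⟩ := exists_pow_lt_of_lt_one hm (by norm_num : (1:ℝ)/3 < 1)
  have hsub : Icc (0:ℝ) ((1/3)^k) ⊆ Iio m := fun x hx => lt_of_le_of_lt hx.2 hk
  have hle := measure_mono (μ := P) hsub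
  rw [cyl_left P hsupp hself k] at hle
  have h2 : (((2:ℝ≥0∞))⁻¹^k).toReal ≤ pf P m := ENNReal.toReal_mono (measure_ne_top P _) hle
  have h3 : (0:ℝ) < (((2:ℝ≥0∞))⁻¹^k).toReal := by
    rw [ENNReal.toReal_pow, ENNReal.toReal_inv, ENNReal.toReal_ofNat]
    positivity
  linarith

lemma pf_lt_one (hsupp : P (Set.Icc 0 1) = 1) (hself : SelfSim P) {m : ℝ} (hm : m < 1) :
    pf P m < 1 := by
  obtain ⟨k, hk⟩ := exists_pow_lt_of_lt_one (by linarith : (0:ℝ) < 1 - m) (by norm_num : (1:ℝ)/3 < 1)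
  have hdisj : Disjoint (Iio m) (Icc (1 - (1/3:ℝ)^k) 1) := by
    rw [Set.disjoint_left]
    intro x hx1 hx2
    simp only [mem_Iio] at hx1
    have := hx2.1
    linarith
  have hunion := measure_union (μ := P) hdisj measurableSet_Icc
  have hle : P (Iio m ∪ Icc (1 - (1/3:ℝ)^k) 1) ≤ 1 := prob_le_one
  rw [hunion, cyl_right P hsupp hself k] at hle
  have hfin1 : P (Iio m) ≠ ⊤ := measure_ne_top P _
  have h2 : pf P m + (((2:ℝ≥0∞))⁻¹^k).toReal ≤ 1 := by
    have := ENNReal.toReal_mono (by simp) hle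
    rw [ENNReal.toReal_add hfin1 (by simp)] at this
    simpa [pf] using this
  have h3 : (0:ℝ) < (((2:ℝ≥0∞))⁻¹^k).toReal := by
    rw [ENNReal.toReal_pow, ENNReal.toReal_inv, ENNReal.toReal_ofNat]
    positivity
  linarith

end
noncomputable section
variable (P : Measure ℝ) [IsProbabilityMeasure P]

lemma tf_bounds (hsupp : P (Set.Icc 0 1) = 1) (hself : SelfSim P) (m : ℝ) :
    0 ≤ tf P m ∧ tf P m ≤ pf P m ∧ tf P m ≤ 1/2 ∧ pf P m - tf P m ≤ 1/2 := by
  have hae := ae_mem01 P hsupp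
  have hid := integrable_id' P hsupp
  have haer : ∀ᵐ x ∂(P.restrict (Iio m)), x ∈ Icc (0:ℝ) 1 := ae_restrict_of_ae hae
  have haerc : ∀ᵐ x ∂(P.restrict (Iio m)ᶜ), x ∈ Icc (0:ℝ) 1 := ae_restrict_of_ae hae
  have ht0 : 0 ≤ tf P m := integral_nonneg_of_ae (haer.mono fun x hx => hx.1)
  have htp : tf P m ≤ pf P m := by
    have h1 : tf P m ≤ ∫ _x in Iio m, (1:ℝ) ∂P :=
      integral_mono_ae hid.integrableOn ((integrable_const (1:ℝ)).integrableOn)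
        (haer.mono fun x hx => hx.2)
    rwa [setIntegral_const, smul_eq_mul, mul_one] at h1
  set u := ∫ x in (Iio m)ᶜ, x ∂P with hu
  have hadd : tf P m + u = 1/2 := by
    rw [tf, hu, integral_add_compl (measurableSet_Iio) hid, moment1 P hsupp hself]
  have hu0 : 0 ≤ u := integral_nonneg_of_ae (haerc.mono fun x hx => hx.1)
  have huc : u ≤ (P (Iio m)ᶜ).toReal := by
    have h1 : u ≤ ∫ _x in (Iio m)ᶜ, (1:ℝ) ∂P :=
      integral_mono_ae hid.integrableOn ((integrable_const (1:ℝ)).integrableOn)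
        (haerc.mono fun x hx => hx.2)
    rwa [setIntegral_const, smul_eq_mul, mul_one] at h1
  have hsum : pf P m + (P (Iio m)ᶜ).toReal = 1 := by
    have := measure_add_measure_compl (μ := P) (measurableSet_Iio : MeasurableSet (Iio m))
    rw [measure_univ] at this
    have h2 := congrArg ENNReal.toReal this
    rwa [ENNReal.toReal_add (measure_ne_top P _) (measure_ne_top P _), ENNReal.toReal_one] at h2
  exact ⟨ht0, htp, by linarith, by linarith⟩

lemma pf_mid (hsupp : P (Set.Icc 0 1) = 1) (hself : SelfSim P) {m : ℝ}
    (h1 : 1/3 ≤ m) (h2 : m ≤ 2/3) : pf P m = 1/2 ∧ tf P m = 1/12 := by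
  have hr1 := pf_rec P hsupp hself m
  have hr2 := tf_rec P hsupp hself m
  have hgo : (1:ℝ) ≤ 3*m := by linarith
  have hlo : 3*m - 2 ≤ 0 := by linarith
  obtain ⟨hp1, ht1⟩ := pf_ge_one P hsupp hself hgo
  obtain ⟨hp0, ht0⟩ := pf_nonpos P hsupp hlo
  rw [hp1, hp0] at hr1
  rw [ht1, ht0, hp0] at hr2
  norm_num at hr1 hr2
  exact ⟨hr1, hr2⟩

end
noncomputable section
variable (P : Measure ℝ) [IsProbabilityMeasure P]

set_option maxHeartbeats 1000000 in
lemma key_ineq (hsupp : P (Set.Icc 0 1) = 1) (hself : SelfSim P) (m : ℝ)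
    (hp0 : 0 < pf P m) (hp1 : pf P m < 1) :
    (tf P m)^2 / pf P m + (1/2 - tf P m)^2 / (1 - pf P m) ≤ 13/36 ∧
    ((tf P m)^2 / pf P m + (1/2 - tf P m)^2 / (1 - pf P m) = 13/36 →
      pf P m = 1/2 ∧ tf P m = 1/12) := by
  rcases lt_or_ge m (1/3) with hm | hm
  · -- m < 1/3 : strict inequality
    set q := pf P (3*m) with hq
    set s := tf P (3*m) with hs
    have hz := pf_nonpos P hsupp (by linarith : 3*m - 2 ≤ 0)
    have hrec1 : pf P m = q/2 := by
      rw [pf_rec P hsupp hself m, hz.1]; ring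
    have hrec2 : tf P m = s/6 := by
      rw [tf_rec P hsupp hself m, hz.1, hz.2]; ring
    have hq1 : q < 1 := pf_lt_one P hsupp hself (by linarith : 3*m < 1)
    have hq0 : 0 < q := by rw [hrec1] at hp0; linarith
    obtain ⟨hs0, hsq, hs12, hqs⟩ := tf_bounds P hsupp hself (3*m)
    have heq : (tf P m)^2 / pf P m + (1/2 - tf P m)^2 / (1 - pf P m)
        = (s^2*(2-q) + (3-s)^2*q)/(18*(q*(2-q))) := by
      rw [hrec1, hrec2]
      have h1 : q ≠ 0 := ne_of_gt hq0
      have h2 : (2:ℝ) - q ≠ 0 := by linarith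
      field_simp
      ring
    have hpos : (0:ℝ) < 18*(q*(2-q)) := by nlinarith
    have hnum : s^2*(2-q) + (3-s)^2*q < (13/36)*(18*(q*(2-q))) := by
      nlinarith [mul_pos hq0 (sub_pos.mpr hq1), mul_nonneg hs0 (sub_nonneg.mpr hsq),
        mul_nonneg (sub_nonneg.mpr hs12) (sub_nonneg.mpr hsq), sq_nonneg (q - 2*s),
        mul_nonneg (sub_nonneg.mpr hs12) hs0, mul_nonneg (by linarith : (0:ℝ) ≤ 1/2 - (q - s)) hs0,
        mul_pos hq0 hq0, sq_nonneg (1 - q),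
        mul_nonneg (sub_nonneg.mpr hs12) (by linarith : (0:ℝ) ≤ 1 - q)]
    have hlt : (tf P m)^2 / pf P m + (1/2 - tf P m)^2 / (1 - pf P m) < 13/36 := by
      rw [heq, div_lt_iff₀ hpos]
      linarith
    exact ⟨le_of_lt hlt, fun he => absurd he (ne_of_lt hlt)⟩
  · rcases le_or_gt m (2/3) with hm2 | hm2
    · -- middle: equality case
      obtain ⟨hp, ht⟩ := pf_mid P hsupp hself hm hm2
      rw [hp, ht]
      norm_num
    · -- m > 2/3 : strict inequality
      obtain ⟨hp3, ht3⟩ := pf_ge_one P hsupp hself (by linarith : (1:ℝ) ≤ 3*m)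
      have hrec1 : pf P m = 1/2 + pf P (3*m-2)/2 := by
        rw [pf_rec P hsupp hself m, hp3]; try ring
      have hrec2 : tf P m = 1/12 + tf P (3*m-2)/6 + pf P (3*m-2)/3 := by
        rw [tf_rec P hsupp hself m, ht3]; try ring
      set q := pf P (3*m-2) with hq
      set s := tf P (3*m-2) with hs
      have hq0 : 0 < q := pf_pos P hsupp hself (by linarith : (0:ℝ) < 3*m - 2)
      have hq1 : q < 1 := by rw [hrec1] at hp1; linarith
      obtain ⟨hs0, hsq, hs12, hqs⟩ := tf_bounds P hsupp hself (3*m-2)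
      rw [← hq] at hsq hqs
      rw [← hs] at hs0 hsq hs12 hqs
      have heq : (tf P m)^2 / pf P m + (1/2 - tf P m)^2 / (1 - pf P m)
          = ((1+2*s+4*q)^2*(1-q) + (5-2*s-4*q)^2*(1+q))/(72*((1+q)*(1-q))) := by
        have h1 : (1:ℝ) + q ≠ 0 := by linarith
        have h2 : (1:ℝ) - q ≠ 0 := by linarith
        have hA : pf P m = (1+q)/2 := by rw [hrec1]; ring
        have hB : tf P m = (1+2*s+4*q)/12 := by rw [hrec2]; ring
        rw [hA, hB, show (1:ℝ) - (1+q)/2 = (1-q)/2 by ring,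
          show (1:ℝ)/2 - (1+2*s+4*q)/12 = (5-2*s-4*q)/12 by ring]
        field_simp
        ring
      have hpos : (0:ℝ) < 72*((1+q)*(1-q)) := by nlinarith
      have hnum : (1+2*s+4*q)^2*(1-q) + (5-2*s-4*q)^2*(1+q)
          < (13/36)*(72*((1+q)*(1-q))) := by
        nlinarith [mul_pos hq0 (sub_pos.mpr hq1), mul_nonneg hs0 (sub_nonneg.mpr hsq),
          mul_nonneg (sub_nonneg.mpr hs12) (sub_nonneg.mpr hsq), sq_nonneg (q - 2*s),
          mul_nonneg (sub_nonneg.mpr hs12) hs0,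
          mul_nonneg (by linarith : (0:ℝ) ≤ 1/2 - (q - s)) hs0,
          mul_nonneg (sub_nonneg.mpr hs12) (by linarith : (0:ℝ) ≤ 1 - q),
          mul_nonneg hs0 (by linarith : (0:ℝ) ≤ 1 - q)]
      have hlt : (tf P m)^2 / pf P m + (1/2 - tf P m)^2 / (1 - pf P m) < 13/36 := by
        rw [heq, div_lt_iff₀ hpos]
        linarith
      exact ⟨le_of_lt hlt, fun he => absurd he (ne_of_lt hlt)⟩

end
noncomputable section
variable (P : Measure ℝ) [IsProbabilityMeasure P]

lemma integrable_sq_shift (hsupp : P (Set.Icc 0 1) = 1) (b : ℝ) :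
    Integrable (fun x => (x - b)^2) P := by
  have : (fun x : ℝ => (x - b)^2) = fun x => x^2 - (2*b)*x + b^2 := by funext x; ring
  rw [this]
  exact ((integrable_sq P hsupp).sub ((integrable_id' P hsupp).const_mul _)).add
    (integrable_const _)

lemma int_sq_shift (hsupp : P (Set.Icc 0 1) = 1) (hself : SelfSim P) (b : ℝ) :
    ∫ x, (x - b)^2 ∂P = 3/8 - b + b^2 := by
  have h : (fun x : ℝ => (x - b)^2) = fun x => x^2 - 2*b*x + b^2 := by funext x; ring
  have hI1 : Integrable (fun x : ℝ => x^2 - 2*b*x) P :=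
    (integrable_sq P hsupp).sub ((integrable_id' P hsupp).const_mul (2*b))
  rw [h, integral_add hI1 (integrable_const _),
    integral_sub (integrable_sq P hsupp) ((integrable_id' P hsupp).const_mul (2*b)),
    integral_const_mul, integral_const, moment1 P hsupp hself, moment2 P hsupp hself]
  simp [measure_univ]
  ring

lemma setint_linear (hsupp : P (Set.Icc 0 1) = 1) (c d m : ℝ) :
    ∫ x in Iio m, (c*x - d) ∂P = c * tf P m - d * pf P m := by
  rw [integral_sub ((integrable_id' P hsupp).integrableOn.const_mul c)
    ((integrable_const d).integrableOn),
    integral_const_mul, setIntegral_const]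
  simp [tf, pf, Measure.real]
  ring

lemma err_pair (hsupp : P (Set.Icc 0 1) = 1) (hself : SelfSim P) (a b : ℝ) (hab : a ≤ b) :
    err P {a, b} = 3/8 - b + b^2 + (2*(b-a)) * tf P ((a+b)/2)
      - (b^2-a^2) * pf P ((a+b)/2) := by
  set m := (a+b)/2 with hm
  have h1 : ∀ x : ℝ, sInf ((fun c => (x - c) ^ 2) '' {a, b})
      = (x-a)^2 ⊓ (x-b)^2 := by
    intro x
    rw [image_pair, csInf_pair]
  have h2 : ∀ x : ℝ, (x-a)^2 ⊓ (x-b)^2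
      = (x-b)^2 + (Iio m).indicator (fun x => 2*(b-a)*x - (b^2-a^2)) x := by
    intro x
    show min ((x-a)^2) ((x-b)^2) = _
    rcases lt_or_ge x m with h | h
    · rw [Set.indicator_of_mem (show x ∈ Iio m from h),
        min_eq_left (by nlinarith [show x < (a+b)/2 from hm ▸ h])]
      ring
    · rw [Set.indicator_of_notMem (show x ∉ Iio m by simpa using not_lt.mpr h),
        min_eq_right (by nlinarith [show (a+b)/2 ≤ x from hm ▸ h])]
      ring
  have hlin : Integrable (fun x : ℝ => 2*(b-a)*x - (b^2-a^2)) P :=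
    ((integrable_id' P hsupp).const_mul _).sub (integrable_const _)
  unfold err
  simp_rw [h1, h2]
  rw [integral_add (integrable_sq_shift P hsupp b) (hlin.indicator measurableSet_Iio),
    int_sq_shift P hsupp hself b, integral_indicator measurableSet_Iio,
    setint_linear P hsupp]
  ring

lemma err_singleton (hsupp : P (Set.Icc 0 1) = 1) (hself : SelfSim P) (a : ℝ) :
    err P {a} = 3/8 - a + a^2 := by
  unfold err
  simp_rw [image_singleton, csInf_singleton]
  exact int_sq_shift P hsupp hself a

end
noncomputable section
variable (P : Measure ℝ) [IsProbabilityMeasure P]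

set_option maxHeartbeats 2000000 in
lemma main_pair (hsupp : P (Set.Icc 0 1) = 1) (hself : SelfSim P) (a b : ℝ) (hab : a < b) :
    1/72 ≤ err P {a, b} ∧ (err P {a, b} = 1/72 ↔ a = 1/6 ∧ b = 5/6) := by
  set m := (a+b)/2 with hm
  set p := pf P m with hp
  set t := tf P m with ht
  have hdec := err_pair P hsupp hself a b hab.le
  rw [← hm, ← hp, ← ht] at hdec
  obtain ⟨ht0, htp, ht12, hpt⟩ := tf_bounds P hsupp hself m
  rw [← ht] at ht0 htp ht12 hpt
  rw [← hp] at htp hpt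
  obtain ⟨hpl, hpu⟩ := pf_mem P m
  rw [← hp] at hpl hpu
  have hmid : a = 1/6 ∧ b = 5/6 → p = 1/2 ∧ t = 1/12 := by
    rintro ⟨ha, hb⟩
    have hm12 : m = 1/2 := by rw [hm, ha, hb]; norm_num
    have := pf_mid P hsupp hself (by rw [hm12]; norm_num : 1/3 ≤ m) (by rw [hm12]; norm_num)
    exact ⟨by rw [hp, this.1], by rw [ht, this.2]⟩
  by_cases hp0 : p = 0
  · have ht00 : t = 0 := le_antisymm (hp0 ▸ htp) ht0
    have herr : err P {a, b} = 3/8 - b + b^2 := by rw [hdec, hp0, ht00]; ring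
    have hge : 1/8 ≤ err P {a, b} := by rw [herr]; nlinarith [sq_nonneg (b - 1/2)]
    refine ⟨by linarith, ?_⟩
    constructor
    · intro he; linarith
    · intro hab6
      have := (hmid hab6).1
      rw [this] at hp0; norm_num at hp0
  · by_cases hp1 : p = 1
    · have ht00 : t = 1/2 := le_antisymm ht12 (by linarith [hpt, hp1.ge, hp1.le]; )
      have herr : err P {a, b} = 3/8 - a + a^2 := by rw [hdec, hp1, ht00]; ring
      have hge : 1/8 ≤ err P {a, b} := by rw [herr]; nlinarith [sq_nonneg (a - 1/2)]
      refine ⟨by linarith, ?_⟩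
      constructor
      · intro he; linarith
      · intro hab6
        have := (hmid hab6).1
        rw [this] at hp1; norm_num at hp1
    · have hp0' : 0 < p := lt_of_le_of_ne hpl (Ne.symm hp0)
      have hp1' : p < 1 := lt_of_le_of_ne hpu hp1
      have hkey := key_ineq P hsupp hself m hp0' hp1'
      rw [← hp, ← ht] at hkey
      have hq0 : (0:ℝ) < 1 - p := by linarith
      have hid2 : err P {a, b} - 1/72
          = (13/36 - (t^2/p + (1/2-t)^2/(1-p)))
            + (a*p - t)^2/p + (b*(1-p) - (1/2-t))^2/(1-p) := by
        rw [hdec]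
        field_simp
        ring
      have hX : 0 ≤ 13/36 - (t^2/p + (1/2-t)^2/(1-p)) := by linarith [hkey.1]
      have hY : 0 ≤ (a*p - t)^2/p := div_nonneg (sq_nonneg _) hp0'.le
      have hZ : 0 ≤ (b*(1-p) - (1/2-t))^2/(1-p) := div_nonneg (sq_nonneg _) hq0.le
      refine ⟨by linarith, ?_⟩
      constructor
      · intro he
        rw [he] at hid2
        have hX0 : 13/36 - (t^2/p + (1/2-t)^2/(1-p)) = 0 := by linarith
        have hY0 : (a*p - t)^2/p = 0 := by linarith
        have hZ0 : (b*(1-p) - (1/2-t))^2/(1-p) = 0 := by linarith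
        obtain ⟨hpv, htv⟩ := hkey.2 (by linarith)
        have ha6 : a * p - t = 0 := by
          have := (div_eq_zero_iff.mp hY0).resolve_right (ne_of_gt hp0')
          exact sq_eq_zero_iff.mp this
        have hb6 : b*(1-p) - (1/2-t) = 0 := by
          have := (div_eq_zero_iff.mp hZ0).resolve_right (ne_of_gt hq0)
          exact sq_eq_zero_iff.mp this
        rw [hpv, htv] at ha6 hb6
        constructor <;> linarith
      · intro hab6
        obtain ⟨hpv, htv⟩ := hmid hab6
        rw [hdec, hpv, htv, hab6.1, hab6.2]
        norm_num

end
noncomputable section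
variable (P : Measure ℝ) [IsProbabilityMeasure P]

lemma pair_eq_iff (a b : ℝ) (hab : a < b) :
    ({a, b} : Set ℝ) = {1/6, 5/6} ↔ (a = 1/6 ∧ b = 5/6) := by
  constructor
  · intro h
    have ha : a ∈ ({1/6, 5/6} : Set ℝ) := h ▸ mem_insert a _
    have hb : b ∈ ({1/6, 5/6} : Set ℝ) := h ▸ mem_insert_iff.mpr (Or.inr rfl)
    simp only [mem_insert_iff, mem_singleton_iff] at ha hb
    rcases ha with ha | ha <;> rcases hb with hb | hb
    · exfalso; rw [ha, hb] at hab; exact lt_irrefl _ hab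
    · exact ⟨ha, hb⟩
    · exfalso; rw [ha, hb] at hab; norm_num at hab
    · exfalso; rw [ha, hb] at hab; exact lt_irrefl _ hab
  · rintro ⟨rfl, rfl⟩; rfl

lemma main_all (hsupp : P (Set.Icc 0 1) = 1) (hself : SelfSim P) (A : Set ℝ)
    (hfin : A.Finite) (hne : A.Nonempty) (hcard : A.ncard ≤ 2) :
    1/72 ≤ err P A ∧ (err P A = 1/72 ↔ A = {1/6, 5/6}) := by
  have hpos : 0 < A.ncard := (Set.ncard_pos hfin).mpr hne
  interval_cases h : A.ncard
  · obtain ⟨a, rfl⟩ := Set.ncard_eq_one.mp h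
    have herr := err_singleton P hsupp hself a
    have hge : 1/8 ≤ err P {a} := by rw [herr]; nlinarith [sq_nonneg (a - 1/2)]
    refine ⟨by linarith, ?_⟩
    constructor
    · intro he; linarith
    · intro heq
      exfalso
      have h1 : (1/6:ℝ) ∈ ({a} : Set ℝ) := heq ▸ mem_insert _ _
      have h5 : (5/6:ℝ) ∈ ({a} : Set ℝ) := heq ▸ mem_insert_iff.mpr (Or.inr rfl)
      rw [mem_singleton_iff] at h1 h5
      rw [← h1] at h5
      norm_num at h5
  · obtain ⟨a, b, hne', rfl⟩ := Set.ncard_eq_two.mp h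
    rcases lt_or_gt_of_ne hne' with hlt | hgt
    · obtain ⟨h1, h2⟩ := main_pair P hsupp hself a b hlt
      exact ⟨h1, h2.trans (pair_eq_iff a b hlt).symm⟩
    · rw [Set.pair_comm a b]
      obtain ⟨h1, h2⟩ := main_pair P hsupp hself b a hgt
      exact ⟨h1, h2.trans (pair_eq_iff b a hgt).symm⟩

lemma final_thm (hsupp : P (Set.Icc 0 1) = 1) (hself : SelfSim P) :
    quantErr P 2 = 1 / 72 ∧
    ∀ A : Set ℝ, A.Finite → A.Nonempty → A.ncard ≤ 2 →
      1 / 72 ≤ err P A ∧ (err P A = 1 / 72 ↔ A = {1 / 6, 5 / 6}) := by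
  have hmain := main_all P hsupp hself
  constructor
  · have herr16 : err P {1/6, 5/6} = 1/72 :=
      (main_pair P hsupp hself (1/6) (5/6) (by norm_num)).2.mpr ⟨rfl, rfl⟩
    have hmem : (1/72 : ℝ) ∈ {v | ∃ A : Set ℝ, A.Finite ∧ A.Nonempty ∧ A.ncard ≤ 2 ∧ v = err P A} := by
      refine ⟨{1/6, 5/6}, ?_, ⟨1/6, mem_insert _ _⟩, ?_, herr16.symm⟩
      · exact (Set.finite_singleton _).insert _
      · rw [Set.ncard_pair (by norm_num : (1/6:ℝ) ≠ 5/6)]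
    have hlb : ∀ v ∈ {v | ∃ A : Set ℝ, A.Finite ∧ A.Nonempty ∧ A.ncard ≤ 2 ∧ v = err P A},
        1/72 ≤ v := by
      rintro v ⟨A, hf, hn, hc, rfl⟩
      exact (hmain A hf hn hc).1
    exact le_antisymm (csInf_le ⟨1/72, hlb⟩ hmem) (le_csInf ⟨_, hmem⟩ hlb)
  · exact fun A hf hn hc => hmain A hf hn hc

end

theorem optimal_two_means (P : Measure ℝ) [IsProbabilityMeasure P]
    (hsupp : P (Set.Icc 0 1) = 1) (hself : SelfSim P) :
    quantErr P 2 = 1 / 72 ∧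
    ∀ A : Set ℝ, A.Finite → A.Nonempty → A.ncard ≤ 2 →
      1 / 72 ≤ err P A ∧ (err P A = 1 / 72 ↔ A = {1 / 6, 5 / 6}) :=
  final_thm P hsupp hself

end
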